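/- Fix an integer b ≥ 3. With NCD(b,X) = (X+1)·b^(X+1) − (b^(X+1) − 1)/(b−1) − X − 1 and L(b,X) = NCD(b,X) − 2·NCD(b,X−1) − 3X − 2, the ratio L(b,X)/NCD(b,X) tends to (b−2)/b as X → ∞. -/

import Mathlib

set_option maxHeartbeats 1000000


/-- Number of correct digits of the `10_b^X` High-Water-Mark convergent, as a real number. -/
noncomputable def NCD (b : ℤ) (X : ℕ) : ℝ :=
  (X + 1) * (b : ℝ) ^ (X + 1) - ((b : ℝ) ^ (X + 1) - 1) / ((b : ℝ) - 1) - X - 1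

/-- Predicted length of the High-Water-Mark coefficient following the `10_b^X` convergent. -/
noncomputable def hwmLen (b : ℤ) (X : ℕ) : ℝ := NCD b X - 2 * NCD b (X - 1) - 3 * X - 2

open Filter

/-- Denominator profile: `NCD b X / ((X+1) b^(X+1))` expressed in `u = 1/(X+1)`, `v = (1/b)^X`. -/
noncomputable def hwmB (r u v : ℝ) : ℝ := 1 - u*(1 - v*r⁻¹)*(r-1)⁻¹ - v*r⁻¹

/-- Numerator profile: `hwmLen b X / ((X+1) b^(X+1))` in the same variables. -/
noncomputable def hwmA (r u v : ℝ) : ℝ :=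
  hwmB r u v - (2*(1-u)*r⁻¹ - 2*u*(1 - v)*(r*(r-1))⁻¹ - 2*(1-u)*v*r⁻¹)
    - (3*v*r⁻¹ - u*v*r⁻¹)

lemma hwmB_cont (r : ℝ) : Continuous (fun p : ℝ × ℝ => hwmB r p.1 p.2) := by
  unfold hwmB; fun_prop

lemma hwmA_cont (r : ℝ) : Continuous (fun p : ℝ × ℝ => hwmA r p.1 p.2) := by
  unfold hwmA hwmB; fun_prop

/-- For fixed `b ≥ 3`, `L(b,X)/NCD(b,X) → (b−2)/b` as `X → ∞`. -/
theorem hwm_length_ratio_tendsto (b : ℤ) (hb : 3 ≤ b) :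
    Filter.Tendsto (fun X : ℕ => hwmLen b X / NCD b X) Filter.atTop
      (nhds (((b : ℝ) - 2) / (b : ℝ))) := by
  have hr : (3:ℝ) ≤ (b:ℝ) := by exact_mod_cast hb
  set r : ℝ := (b:ℝ) with hrdef
  have hr0 : (0:ℝ) < r := by linarith
  have hrne : r ≠ 0 := ne_of_gt hr0
  have hr1ne : r - 1 ≠ 0 := by intro h; nlinarith [h]
  have hu : Tendsto (fun X : ℕ => 1/((X:ℝ)+1)) atTop (nhds 0) :=
    tendsto_one_div_add_atTop_nhds_zero_nat
  have hv : Tendsto (fun X : ℕ => (1/r)^X) atTop (nhds 0) :=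
    tendsto_pow_atTop_nhds_zero_of_lt_one (by positivity)
      (by rw [div_lt_one hr0]; linarith)
  have hpair : Tendsto (fun X : ℕ => ((1/((X:ℝ)+1), (1/r)^X) : ℝ × ℝ)) atTop
      (nhds ((0:ℝ), (0:ℝ))) := hu.prodMk_nhds hv
  have hAlim : Tendsto (fun X : ℕ => hwmA r (1/((X:ℝ)+1)) ((1/r)^X)) atTop
      (nhds (hwmA r 0 0)) := by
    have h := ((hwmA_cont r).continuousAt (x := ((0:ℝ),(0:ℝ)))).tendsto.comp hpair
    exact h.congr (fun X => rfl)
  have hBlim : Tendsto (fun X : ℕ => hwmB r (1/((X:ℝ)+1)) ((1/r)^X)) atTop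
      (nhds (hwmB r 0 0)) := by
    have h := ((hwmB_cont r).continuousAt (x := ((0:ℝ),(0:ℝ)))).tendsto.comp hpair
    exact h.congr (fun X => rfl)
  have hB00 : hwmB r 0 0 = 1 := by simp [hwmB]
  have hA00 : hwmA r 0 0 = (r - 2)/r := by
    simp only [hwmA, hwmB]
    field_simp
    ring
  have hmain : Tendsto (fun X : ℕ =>
      hwmA r (1/((X:ℝ)+1)) ((1/r)^X) / hwmB r (1/((X:ℝ)+1)) ((1/r)^X))
      atTop (nhds ((r-2)/r)) := by
    have h := hAlim.div hBlim (by rw [hB00]; norm_num)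
    rwa [hA00, hB00, div_one] at h
  refine hmain.congr' ?_
  filter_upwards [Filter.eventually_ge_atTop 1] with X hX
  obtain ⟨Y, rfl⟩ : ∃ Y, X = Y + 1 := ⟨X - 1, (Nat.succ_pred_eq_of_pos hX).symm⟩
  have hsub : Y + 1 - 1 = Y := rfl
  set n : ℝ := (Y:ℝ) with hn
  have hn0 : (0:ℝ) ≤ n := Nat.cast_nonneg Y
  have hp : (0:ℝ) < r ^ (Y+1) := by positivity
  have hpne : r ^ (Y+1) ≠ 0 := ne_of_gt hp
  have hDne : (n + 2) * (r ^ (Y+1) * r) ≠ 0 := by positivity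
  have hv1 : ((1:ℝ)/r) ^ (Y+1) = (r ^ (Y+1))⁻¹ := by rw [one_div, inv_pow]
  have hcast : ((Y + 1 : ℕ) : ℝ) = n + 1 := by push_cast; ring
  have hnum : hwmLen b (Y+1) =
      ((n + 2) * (r ^ (Y+1) * r)) * hwmA r (1/(n+2)) ((r ^ (Y+1))⁻¹) := by
    simp only [hwmLen, NCD, hsub, hwmA, hwmB, hcast, ← hrdef]
    rw [pow_succ r (Y+1)]
    field_simp
    ring
  have hden : NCD b (Y+1) =
      ((n + 2) * (r ^ (Y+1) * r)) * hwmB r (1/(n+2)) ((r ^ (Y+1))⁻¹) := by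
    simp only [NCD, hwmB, hcast, ← hrdef]
    rw [pow_succ r (Y+1)]
    field_simp
    ring
  have hAeq : hwmA r (1/((↑(Y+1):ℝ)+1)) ((1/r)^(Y+1)) = hwmA r (1/(n+2)) ((r ^ (Y+1))⁻¹) := by
    rw [hv1, hcast]; ring_nf
  have hBeq : hwmB r (1/((↑(Y+1):ℝ)+1)) ((1/r)^(Y+1)) = hwmB r (1/(n+2)) ((r ^ (Y+1))⁻¹) := by
    rw [hv1, hcast]; ring_nf
  simp only [hAeq, hBeq, hnum, hden, mul_div_mul_left _ _ hDne]
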